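/- arXiv:1002.2868 — 9 statements merged into one kernel-verified Lean document; each statement's English description precedes it below -/
import Mathlib

section
/- If a transition system specification is s-complete, then it has a unique supported model, and this unique supported model coincides with the set of all closed positive formulae that have a supported proof. -/
/-!
A Transition System Specification (TSS) over a type `T` of closed terms and a type `L` of
labels.  Since the notions of supported model and supported proof only ever refer to *closed
instances* of the deduction rules (a deduction rule together with a closing substitution
applied to it), we represent a TSS by the set of closed instances of its deduction rules.
-/

/-- Closed formulae: the positive formula `t →[l] t'` and the negative formula `t ↛[l]`. -/
inductive Formula (T L : Type) : Type
  | pos : T → L → T → Formula T L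
  | neg : T → L → Formula T L

namespace Formula

/-- `t →[l] t'` and `t ↛[l]` contradict each other (and nothing else). -/
def contradicts {T L : Type} : Formula T L → Formula T L → Prop
  | pos t l _, neg u m => t = u ∧ l = m
  | neg t l, pos u m _ => t = u ∧ l = m
  | _, _ => False

end Formula

/-- A closed instance of a deduction rule: a set of premises together with a positive
conclusion `src →[lbl] tgt`. -/
structure Rule (T L : Type) where
  prem : Set (Formula T L)
  src : T
  lbl : L
  tgt : T

/-- A transition system specification, given by the set of closed instances of its
deduction rules. -/
structure TSS (T L : Type) where
  rules : Set (Rule T L)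

/-- A transition relation (a set of closed positive formulae, represented as triples `(t, l, t')`)
is *consistent* with a set `Ψ` of closed formulae when every positive formula of `Ψ` belongs to
the relation, and no formula of the relation contradicts a negative formula of `Ψ`. -/
def Consistent {T L : Type} (Tr : Set (T × L × T)) (Ψ : Set (Formula T L)) : Prop :=
  (∀ t l t', Formula.pos t l t' ∈ Ψ → (t, l, t') ∈ Tr) ∧
  (∀ t l, Formula.neg t l ∈ Ψ → ∀ t', (t, l, t') ∉ Tr)

/-- `Tr` is a supported model of the TSS `S` for the set `P` of closed terms and the set `L'`
of labels:
(1) every transition in `Tr` is the conclusion of a closed instance of a deduction rule whose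
    premises are consistent with `Tr`, and
(2) whenever a closed instance of a deduction rule has conclusion `p →[l] p'` with `p ∈ P` and
    `l ∈ L'` and premises consistent with `Tr`, then `(p, l, p') ∈ Tr`. -/
def SupportedModelFor {T L : Type} (S : TSS T L) (P : Set T) (L' : Set L)
    (Tr : Set (T × L × T)) : Prop :=
  (∀ q l q', (q, l, q') ∈ Tr →
      ∃ r ∈ S.rules, r.src = q ∧ r.lbl = l ∧ r.tgt = q' ∧ Consistent Tr r.prem) ∧
  (∀ p ∈ P, ∀ l ∈ L', ∀ p',
      (∃ r ∈ S.rules, r.src = p ∧ r.lbl = l ∧ r.tgt = p' ∧ Consistent Tr r.prem) →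
      (p, l, p') ∈ Tr)

/-- `Tr` is a supported model of the TSS `S` (for all closed terms and all labels). -/
def SupportedModel {T L : Type} (S : TSS T L) (Tr : Set (T × L × T)) : Prop :=
  SupportedModelFor S Set.univ Set.univ Tr

/-- The TSS `S` provides a supported proof of the closed formula `φ`.  This inductive
definition captures precisely the well-founded upwardly branching proof trees: a node labelled
with a positive formula must, together with the set of formulae labelling the nodes above it,
form a closed instance of a deduction rule; a node labelled with a negative formula has a set
`K` of formulae above it such that every closed instance of a deduction rule whose conclusion
contradicts the formula has a premise contradicted by some formula of `K`. -/
inductive SupportedProof {T L : Type} (S : TSS T L) : Formula T L → Prop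
  | pos (r : Rule T L) (hr : r ∈ S.rules)
      (hprem : ∀ ψ ∈ r.prem, SupportedProof S ψ) :
      SupportedProof S (Formula.pos r.src r.lbl r.tgt)
  | neg (t : T) (l : L) (K : Set (Formula T L))
      (hK : ∀ ψ ∈ K, SupportedProof S ψ)
      (hrules : ∀ r ∈ S.rules, r.src = t → r.lbl = l →
          ∃ χ ∈ K, ∃ χ' ∈ r.prem, Formula.contradicts χ χ') :
      SupportedProof S (Formula.neg t l)

/-- A TSS is s-complete when for every closed positive formula, either the formula itself or
the (unique) formula contradicting it has a supported proof. -/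
def SComplete {T L : Type} (S : TSS T L) : Prop :=
  ∀ t l t', SupportedProof S (Formula.pos t l t') ∨ SupportedProof S (Formula.neg t l)

def Sat {T L : Type} (Tr : Set (T × L × T)) : Formula T L → Prop
  | Formula.pos t l t' => (t, l, t') ∈ Tr
  | Formula.neg t l => ∀ t', (t, l, t') ∉ Tr

lemma sat_of_supportedProof {T L : Type} {S : TSS T L} {Tr : Set (T × L × T)}
    (hTr : SupportedModel S Tr) :
    ∀ φ, SupportedProof S φ → Sat Tr φ := by
  intro φ hφ
  induction hφ with
  | pos r hr hprem ih =>
      refine hTr.2 r.src (Set.mem_univ _) r.lbl (Set.mem_univ _) r.tgt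
        ⟨r, hr, rfl, rfl, rfl, ?_, ?_⟩
      · intro t l t' hmem; exact ih _ hmem
      · intro t l hmem t'; exact ih _ hmem t'
  | neg t l K hK hrules ih =>
      intro t' hmem
      obtain ⟨r, hr, hsrc, hlbl, htgt, hcons⟩ := hTr.1 t l t' hmem
      obtain ⟨χ, hχK, χ', hχ'prem, hcon⟩ := hrules r hr hsrc hlbl
      have hsatχ := ih χ hχK
      cases χ with
      | pos u m v =>
          cases χ' with
          | pos _ _ _ => exact hcon
          | neg u' m' =>
              obtain ⟨hu, hm⟩ := hcon
              subst hu; subst hm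
              exact hcons.2 u m hχ'prem v hsatχ
      | neg u m =>
          cases χ' with
          | neg _ _ => exact hcon
          | pos u' m' v' =>
              obtain ⟨hu, hm⟩ := hcon
              subst hu; subst hm
              exact hsatχ v' (hcons.1 u m v' hχ'prem)

lemma contradicts_symm {T L : Type} {φ ψ : Formula T L}
    (h : Formula.contradicts φ ψ) : Formula.contradicts ψ φ := by
  cases φ <;> cases ψ <;> simp_all [Formula.contradicts]

lemma no_contradiction {T L : Type} {S : TSS T L} :
    ∀ φ, SupportedProof S φ → ∀ ψ, SupportedProof S ψ → Formula.contradicts φ ψ → False := by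
  intro φ hφ
  induction hφ with
  | pos r hr hprem ih =>
      intro ψ hψ hcon
      cases ψ with
      | pos _ _ _ => exact hcon
      | neg u m =>
          obtain ⟨hu, hm⟩ := hcon
          cases hψ with
          | neg _ _ K hK hrules =>
              obtain ⟨χ, hχK, χ', hχ'prem, hcon'⟩ := hrules r hr hu hm
              exact ih χ' hχ'prem χ (hK χ hχK) (contradicts_symm hcon')
  | neg t l K hK hrules ih =>
      intro ψ hψ hcon
      cases ψ with
      | neg _ _ => exact hcon
      | pos u m v =>
          obtain ⟨hu, hm⟩ := hcon
          cases hψ with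
          | pos r hr hprem =>
              obtain ⟨χ, hχK, χ', hχ'prem, hcon'⟩ := hrules r hr hu.symm hm.symm
              exact ih χ hχK χ' (hprem χ' hχ'prem) hcon'

lemma provable_isModel {T L : Type} (S : TSS T L) (h : SComplete S) :
    SupportedModel S {x : T × L × T | SupportedProof S (Formula.pos x.1 x.2.1 x.2.2)} := by
  set M : Set (T × L × T) := {x | SupportedProof S (Formula.pos x.1 x.2.1 x.2.2)} with hM
  constructor
  · intro q l q' hmem
    cases hmem with
    | pos r hr hprem =>
        refine ⟨r, hr, rfl, rfl, rfl, ?_, ?_⟩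
        · intro t m t' ht; exact hprem _ ht
        · intro t m ht t' hmem'
          exact no_contradiction _ hmem' _ (hprem _ ht) ⟨rfl, rfl⟩
  · rintro p - l - p' ⟨r, hr, hsrc, hlbl, htgt, hcons⟩
    subst hsrc; subst hlbl; subst htgt
    have : SupportedProof S (Formula.pos r.src r.lbl r.tgt) := by
      apply SupportedProof.pos r hr
      intro ψ hψ
      cases ψ with
      | pos t m t' => exact hcons.1 t m t' hψ
      | neg t m =>
          rcases h t m t with hp | hn
          · exact absurd hp (hcons.2 t m hψ t)
          · exact hn
    exact this

/-- If a TSS is s-complete, then it has a unique supported model, and this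
unique supported model coincides with the set of all closed positive formulae that have a
supported proof. -/
theorem sComplete_imp_unique_supported_model {T L : Type} (S : TSS T L) (h : SComplete S) :
    (∃! Tr : Set (T × L × T), SupportedModel S Tr) ∧
    (∀ Tr : Set (T × L × T), SupportedModel S Tr →
      Tr = {x : T × L × T | SupportedProof S (Formula.pos x.1 x.2.1 x.2.2)}) := by
  have key : ∀ Tr : Set (T × L × T), SupportedModel S Tr →
      Tr = {x : T × L × T | SupportedProof S (Formula.pos x.1 x.2.1 x.2.2)} := by
    intro Tr hTr
    ext ⟨t, l, t'⟩
    constructor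
    · intro hmem
      rcases h t l t' with hp | hn
      · exact hp
      · exact absurd hmem (sat_of_supportedProof hTr _ hn t')
    · intro hmem
      exact sat_of_supportedProof hTr _ hmem
  exact ⟨⟨_, provable_isModel S h, fun Tr hTr => key Tr hTr⟩, key⟩
end

section
/- In the TSS consisting of the single deduction rule r1 = ({p →s p}, p →s p) over the signature with the single constant p and the single label s, neither the formula p →s p nor the formula p ↛s has a supported proof; hence this TSS is not s-complete. -/
/-- The deduction rule `r1 = ({p →s p}, p →s p)` over the signature with the single constant
`p` (the unique element of `Unit`) and the single label `s` (the unique element of `Unit`). -/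
def r1 : Rule Unit Unit := ⟨{Formula.pos () () ()}, (), (), ()⟩

/-- The deduction rule `r2 = ({p ↛s}, p →s p)`. -/
def r2 : Rule Unit Unit := ⟨{Formula.neg () ()}, (), (), ()⟩

lemma no_proof : ∀ φ, ¬ SupportedProof (⟨{r1}⟩ : TSS Unit Unit) φ := by
  intro φ h
  induction h with
  | pos r hr hprem ih =>
      simp only [Set.mem_singleton_iff] at hr
      subst hr
      exact ih (Formula.pos () () ()) rfl
  | neg t l K hK hrules ih =>
      obtain ⟨χ, hχK, χ', hχ', hc⟩ := hrules r1 rfl rfl rfl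
      exact ih χ hχK

/-- In the TSS consisting of the single rule `r1`, neither `p →s p` nor
`p ↛s` has a supported proof; hence this TSS is not s-complete. -/
theorem tss_r1_not_sComplete :
    ¬ SupportedProof (⟨{r1}⟩ : TSS Unit Unit) (Formula.pos () () ()) ∧
    ¬ SupportedProof (⟨{r1}⟩ : TSS Unit Unit) (Formula.neg () ()) ∧
    ¬ SComplete (⟨{r1}⟩ : TSS Unit Unit) := by
  refine ⟨no_proof _, no_proof _, fun h => ?_⟩
  rcases h () () () with h | h
  · exact no_proof _ h
  · exact no_proof _ h
end

section
/- In the TSS consisting of the single deduction rule r2 = ({p ↛s}, p →s p) over the signature with the single constant p and the single label s, neither the formula p →s p nor the formula p ↛s has a supported proof; hence this TSS is not s-complete. -/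
/-- In the TSS consisting of the single rule `r2`, neither `p →s p` nor
`p ↛s` has a supported proof; hence this TSS is not s-complete. -/
theorem tss_r2_not_sComplete :
    ¬ SupportedProof (⟨{r2}⟩ : TSS Unit Unit) (Formula.pos () () ()) ∧
    ¬ SupportedProof (⟨{r2}⟩ : TSS Unit Unit) (Formula.neg () ()) ∧
    ¬ SComplete (⟨{r2}⟩ : TSS Unit Unit) := by
  have key : ∀ φ, ¬ SupportedProof (⟨{r2}⟩ : TSS Unit Unit) φ := by
    intro φ h
    induction h with
    | pos r hr hprem ih =>
        have hr2 : r = r2 := hr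
        subst hr2
        exact ih (Formula.neg () ()) rfl
    | neg t l K hK hrules ih =>
        obtain ⟨χ, hχK, χ', hχ', hcon⟩ := hrules r2 rfl rfl rfl
        have hχ'2 : χ' = Formula.neg () () := hχ'
        subst hχ'2
        cases χ with
        | pos a b c => exact ih _ hχK
        | neg a b => exact hcon.elim
  refine ⟨key _, key _, fun hc => ?_⟩
  rcases hc () () () with h | h
  · exact key _ h
  · exact key _ h
end

section
/- In the TSS consisting of the two deduction rules r1 = ({p →s p}, p →s p) and r2 = ({p ↛s}, p →s p) over the signature with the single constant p and the single label s, neither the formula p →s p nor the formula p ↛s has a supported proof; hence this TSS has a unique supported model but is not s-complete (so the converse of the theorem 's-completeness implies a unique supported model' fails). -/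
lemma no_supported_proof (φ : Formula Unit Unit) :
    ¬ SupportedProof (⟨{r1, r2}⟩ : TSS Unit Unit) φ := by
  intro h
  induction h with
  | pos r hr hprem ih =>
    rcases hr with h1 | h2
    · exact ih (Formula.pos () () ()) (by subst h1; simp [r1])
    · exact ih (Formula.neg () ()) (by simp only [Set.mem_singleton_iff] at h2; subst h2; simp [r2])
  | neg t l K hK hrules ih =>
    obtain ⟨χ, hχ, _⟩ := hrules r1 (by left; rfl) rfl rfl
    exact ih χ hχ

lemma univ_model : SupportedModel (⟨{r1, r2}⟩ : TSS Unit Unit)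
    ({((), (), ())} : Set (Unit × Unit × Unit)) := by
  constructor
  · intro q l q' _
    refine ⟨r1, by left; rfl, rfl, rfl, rfl, ?_, ?_⟩
    · intro t l t' hmem
      simp [r1] at hmem
      simp
    · intro t l hmem
      simp [r1] at hmem
  · intro p _ l _ p' _
    simp

/-- In the TSS consisting of the two rules `r1` and `r2`, neither `p →s p`
nor `p ↛s` has a supported proof; hence this TSS has a unique supported model but is not
s-complete (so the converse of 's-completeness implies a unique supported model' fails). -/
theorem tss_r1_r2_unique_model_not_sComplete :
    ¬ SupportedProof (⟨{r1, r2}⟩ : TSS Unit Unit) (Formula.pos () () ()) ∧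
    ¬ SupportedProof (⟨{r1, r2}⟩ : TSS Unit Unit) (Formula.neg () ()) ∧
    (∃! Tr : Set (Unit × Unit × Unit), SupportedModel (⟨{r1, r2}⟩ : TSS Unit Unit) Tr) ∧
    ¬ SComplete (⟨{r1, r2}⟩ : TSS Unit Unit) := by
  refine ⟨no_supported_proof _, no_supported_proof _, ⟨{((), (), ())}, univ_model, ?_⟩, ?_⟩
  · intro Tr hTr
    ext ⟨⟨⟩, ⟨⟩, ⟨⟩⟩
    simp only [Set.mem_singleton_iff]
    constructor
    · intro _; trivial
    · intro _
      by_contra hpt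
      apply hpt
      apply hTr.2 () (Set.mem_univ _) () (Set.mem_univ _) ()
      refine ⟨r2, by right; rfl, rfl, rfl, rfl, ?_, ?_⟩
      · intro t l t' hmem; simp [r2] at hmem
      · intro t l _ t'
        exact hpt
  · intro hsc
    rcases hsc () () () with h | h <;> exact no_supported_proof _ h
end

section
/- Let P1 be the Esterel program 'present s then emit s else 0' with context c = P1. In the Esterel TSS, P1 has at least two distinct supported models for P = subterms(P1) = {P1, emit s, 0} and the labels {⊨_{P1} s, ✓_{P1}, →_{P1,s}}: there is a supported model containing the emission predicate P1 ⊨_{P1} s and a supported model not containing it. Hence P1 is not logically coherent (it does not have a unique supported model). -/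
/-!
A fragment of Esterel and its TSS.  Closed programs are generated by
`p, q ::= 0 | emit x | present x then p else q | p ; q | p ∥ q` where `x` ranges over a type
`S` of signals (no input signals and no local-signal encapsulation, and the input evaluation
is empty throughout, so it is omitted).  The TSS is represented by the set of closed instances
of its deduction rules, all parameterized by a fixed closed context program `c`.
-/

/-- Esterel programs (the fragment without inputs, traps, loops, time and encapsulation). -/
inductive Prog (S : Type) : Type
  | nil : Prog S                             -- 0
  | emit : S → Prog S                        -- emit x
  | present : S → Prog S → Prog S → Prog S   -- present x then p else q
  | seq : Prog S → Prog S → Prog S           -- p ; q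
  | par : Prog S → Prog S → Prog S           -- p ∥ q

/-- The subterms of a program (the program itself together with the subterms of its
immediate components). -/
def Prog.subterms {S : Type} : Prog S → Set (Prog S)
  | .nil => {Prog.nil}
  | .emit x => {Prog.emit x}
  | .present x p q => insert (Prog.present x p q) (p.subterms ∪ q.subterms)
  | .seq p q => insert (Prog.seq p q) (p.subterms ∪ q.subterms)
  | .par p q => insert (Prog.par p q) (p.subterms ∪ q.subterms)

/-- Closed formulae of the Esterel TSS (for a fixed context, which is left implicit):
emission predicates `p ⊨ x`, termination predicates `p ✓`, transitions `p →x p'`, and their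
negations. -/
inductive EFormula (S : Type) : Type
  | emits : Prog S → S → EFormula S            -- p ⊨ x
  | nemits : Prog S → S → EFormula S           -- ¬(p ⊨ x)
  | term : Prog S → EFormula S                 -- p ✓
  | nterm : Prog S → EFormula S                -- ¬(p ✓)
  | trans : Prog S → S → Prog S → EFormula S   -- p →x p'
  | ntrans : Prog S → S → EFormula S           -- p ↛x

namespace EFormula

/-- Positive formulae. -/
def isPos {S : Type} : EFormula S → Prop
  | emits _ _ => True
  | term _ => True
  | trans _ _ _ => True
  | _ => False

/-- Each positive formula is contradicted by (exactly) its negation, and vice versa. -/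
def contradicts {S : Type} : EFormula S → EFormula S → Prop
  | emits p x, nemits q y => p = q ∧ x = y
  | nemits p x, emits q y => p = q ∧ x = y
  | term p, nterm q => p = q
  | nterm p, term q => p = q
  | trans p x _, ntrans q y => p = q ∧ x = y
  | ntrans p x, trans q y _ => p = q ∧ x = y
  | _, _ => False

end EFormula

/-- The labels of the Esterel TSS: `⊨ x`, `✓` and `→x`. -/
inductive ELabel (S : Type) : Type
  | emits : S → ELabel S
  | term : ELabel S
  | trans : S → ELabel S

/-- The source (program) of a formula. -/
def EFormula.src {S : Type} : EFormula S → Prog S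
  | .emits p _ => p
  | .nemits p _ => p
  | .term p => p
  | .nterm p => p
  | .trans p _ _ => p
  | .ntrans p _ => p

/-- The label of a formula. -/
def EFormula.lbl {S : Type} : EFormula S → ELabel S
  | .emits _ x => ELabel.emits x
  | .nemits _ x => ELabel.emits x
  | .term _ => ELabel.term
  | .nterm _ => ELabel.term
  | .trans _ x _ => ELabel.trans x
  | .ntrans _ x => ELabel.trans x

/-- The closed instances of the deduction rules of the Esterel TSS with context `c`:
`EsterelRule c K φ` holds when `(K, φ)` is a closed instance of a deduction rule
(with premises `K` and conclusion `φ`). -/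
inductive EsterelRule {S : Type} (c : Prog S) : Set (EFormula S) → EFormula S → Prop
  | e0 (x) : EsterelRule c ∅ (EFormula.emits (Prog.emit x) x)
  | s0 (p q x) : EsterelRule c {EFormula.emits p x} (EFormula.emits (Prog.seq p q) x)
  | s1 (p q x) : EsterelRule c {EFormula.term p, EFormula.emits q x}
      (EFormula.emits (Prog.seq p q) x)
  | s2 (p p' q x x') : EsterelRule c
      {EFormula.trans p x' p', EFormula.term p', EFormula.emits q x}
      (EFormula.emits (Prog.seq p q) x)
  | p0 (p q x) : EsterelRule c {EFormula.emits p x} (EFormula.emits (Prog.par p q) x)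
  | p1 (p q x) : EsterelRule c {EFormula.emits q x} (EFormula.emits (Prog.par p q) x)
  | f0 (s p q x) : EsterelRule c {EFormula.emits c s, EFormula.emits p x}
      (EFormula.emits (Prog.present s p q) x)
  | f1 (s p q x) : EsterelRule c {EFormula.nemits c s, EFormula.emits q x}
      (EFormula.emits (Prog.present s p q) x)
  | nil : EsterelRule c ∅ (EFormula.term Prog.nil)
  | em (x) : EsterelRule c ∅ (EFormula.trans (Prog.emit x) x Prog.nil)
  | seq0 (p p' q q' x x') : EsterelRule c
      {EFormula.trans p x p', EFormula.term p', EFormula.trans q x' q'}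
      (EFormula.trans (Prog.seq p q) x q')
  | seq1 (p p' q q' x x') : EsterelRule c
      {EFormula.trans p x p', EFormula.term p', EFormula.trans q x' q'}
      (EFormula.trans (Prog.seq p q) x' q')
  | seq2 (p q q' x) : EsterelRule c {EFormula.term p, EFormula.trans q x q'}
      (EFormula.trans (Prog.seq p q) x q')
  | seq3 (p p' q x) : EsterelRule c
      {EFormula.trans p x p', EFormula.term p', EFormula.term q}
      (EFormula.trans (Prog.seq p q) x p')
  | seq4 (p q) : EsterelRule c {EFormula.term p, EFormula.term q}
      (EFormula.term (Prog.seq p q))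
  | par0 (p p' q q' x x') : EsterelRule c
      {EFormula.trans p x p', EFormula.trans q x' q'}
      (EFormula.trans (Prog.par p q) x (Prog.par p' q'))
  | par1 (p p' q q' x x') : EsterelRule c
      {EFormula.trans p x p', EFormula.trans q x' q'}
      (EFormula.trans (Prog.par p q) x' (Prog.par p' q'))
  | par2 (p q q' x) : EsterelRule c {EFormula.term p, EFormula.trans q x q'}
      (EFormula.trans (Prog.par p q) x q')
  | par3 (p p' q x) : EsterelRule c {EFormula.trans p x p', EFormula.term q}
      (EFormula.trans (Prog.par p q) x p')
  | par4 (p q) : EsterelRule c {EFormula.term p, EFormula.term q}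
      (EFormula.term (Prog.par p q))
  | if0 (s p p' q x) : EsterelRule c {EFormula.emits c s, EFormula.trans p x p'}
      (EFormula.trans (Prog.present s p q) x p')
  | if1 (s p q q' x) : EsterelRule c {EFormula.nemits c s, EFormula.trans q x q'}
      (EFormula.trans (Prog.present s p q) x q')
  | if4 (s p q) : EsterelRule c {EFormula.emits c s, EFormula.term p}
      (EFormula.term (Prog.present s p q))
  | if5 (s p q) : EsterelRule c {EFormula.nemits c s, EFormula.term q}
      (EFormula.term (Prog.present s p q))

/-- A transition relation `T` (a set of positive closed formulae) is consistent with a set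
`Ψ` of closed formulae: every positive formula of `Ψ` belongs to `T`, and no formula of `T`
contradicts a negative formula of `Ψ`. -/
def EConsistent {S : Type} (T Ψ : Set (EFormula S)) : Prop :=
  (∀ φ ∈ Ψ, φ.isPos → φ ∈ T) ∧
  (∀ φ ∈ Ψ, ¬ φ.isPos → ∀ χ ∈ T, ¬ χ.contradicts φ)

/-- `T` is a supported model of the Esterel TSS with context `c`, for the set `P` of closed
terms and the set `L'` of labels: `T` is a transition relation (a set of positive formulae)
such that (1) every formula in `T` is the conclusion of a closed instance of a deduction rule
whose premises are consistent with `T`, and (2) for every closed instance of a deduction rule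
whose conclusion has its source in `P` and its label in `L'` and whose premises are consistent
with `T`, the conclusion belongs to `T`. -/
def ESupportedModel {S : Type} (c : Prog S) (P : Set (Prog S)) (L' : Set (ELabel S))
    (T : Set (EFormula S)) : Prop :=
  (∀ φ ∈ T, φ.isPos) ∧
  (∀ φ ∈ T, ∃ K, EsterelRule c K φ ∧ EConsistent T K) ∧
  (∀ K φ, EsterelRule c K φ → φ.src ∈ P → φ.lbl ∈ L' → EConsistent T K → φ ∈ T)

/-- The Esterel TSS with context `c` provides a supported proof of the closed formula `φ`.
This inductive definition captures precisely the well-founded upwardly branching proof trees: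
a node labelled with a positive formula must, together with the set of formulae labelling the
nodes above it, form a closed instance of a deduction rule; a node labelled with a negative
formula has a set `K` of formulae above it such that every closed instance of a deduction rule
whose conclusion contradicts the formula has a premise contradicted by some formula of `K`. -/
inductive ESupProof {S : Type} (c : Prog S) : EFormula S → Prop
  | pos (K : Set (EFormula S)) (φ : EFormula S) (hrule : EsterelRule c K φ)
      (hprem : ∀ ψ ∈ K, ESupProof c ψ) : ESupProof c φ
  | neg (φ : EFormula S) (hφ : ¬ φ.isPos) (K : Set (EFormula S))
      (hK : ∀ ψ ∈ K, ESupProof c ψ)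
      (hrules : ∀ K' ψ', EsterelRule c K' ψ' → ψ'.contradicts φ →
          ∃ χ ∈ K, ∃ χ' ∈ K', χ.contradicts χ') :
      ESupProof c φ

/-- The program `P1 = present s then emit s else 0`. -/
def P1 {S : Type} (s : S) : Prog S := Prog.present s (Prog.emit s) Prog.nil

/-- The labels `{⊨ s, ✓, →s}`. -/
def L1 {S : Type} (s : S) : Set (ELabel S) := {ELabel.emits s, ELabel.term, ELabel.trans s}


section Aux

variable {S : Type} (s : S)

/-- The supported model containing `P1 ⊨ s`. -/
def Tpos : Set (EFormula S) :=
  {EFormula.emits (Prog.emit s) s, EFormula.trans (Prog.emit s) s Prog.nil,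
   EFormula.term Prog.nil, EFormula.emits (P1 s) s, EFormula.trans (P1 s) s Prog.nil}

/-- The supported model not containing `P1 ⊨ s`. -/
def Tneg : Set (EFormula S) :=
  {EFormula.emits (Prog.emit s) s, EFormula.trans (Prog.emit s) s Prog.nil,
   EFormula.term Prog.nil, EFormula.term (P1 s)}

lemma subterms_P1 : (P1 s).subterms = ({P1 s, Prog.emit s, Prog.nil} : Set (Prog S)) := by
  ext p
  simp only [P1, Prog.subterms, Set.mem_insert_iff, Set.mem_union, Set.mem_singleton_iff]

lemma econs_empty (T : Set (EFormula S)) : EConsistent T ∅ := by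
  constructor <;> intro φ h <;> simp at h

lemma Tpos_model :
    ESupportedModel (P1 s) ({P1 s, Prog.emit s, Prog.nil} : Set (Prog S)) (L1 s) (Tpos s) := by
  refine ⟨?_, ?_, ?_⟩
  · intro φ hφ
    rcases hφ with h | h | h | h | h <;> subst h <;> trivial
  · intro φ hφ
    rcases hφ with h | h | h | h | h <;> subst h
    · exact ⟨∅, EsterelRule.e0 s, econs_empty _⟩
    · exact ⟨∅, EsterelRule.em s, econs_empty _⟩
    · exact ⟨∅, EsterelRule.nil, econs_empty _⟩
    · refine ⟨_, EsterelRule.f0 s (Prog.emit s) Prog.nil s, ?_, ?_⟩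
      · intro ψ hψ _
        rcases hψ with h | h <;> subst h <;> simp [Tpos, P1]
      · intro ψ hψ hnp
        rcases hψ with h | h <;> subst h <;> exact absurd trivial hnp
    · refine ⟨_, EsterelRule.if0 s (Prog.emit s) Prog.nil Prog.nil s, ?_, ?_⟩
      · intro ψ hψ _
        rcases hψ with h | h <;> subst h <;> simp [Tpos, P1]
      · intro ψ hψ hnp
        rcases hψ with h | h <;> subst h <;> exact absurd trivial hnp
  · intro K φ hr hs hl hc
    cases hr with
    | e0 x =>
        rcases hs with h | h | h <;> simp [EFormula.src, P1] at h
        subst h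
        simp [Tpos]
    | nil => simp [Tpos]
    | em x =>
        rcases hs with h | h | h <;> simp [EFormula.src, P1] at h
        subst h
        simp [Tpos]
    | s0 p q x => rcases hs with h | h | h <;> simp [EFormula.src, P1] at h
    | s1 p q x => rcases hs with h | h | h <;> simp [EFormula.src, P1] at h
    | s2 p p' q x x' => rcases hs with h | h | h <;> simp [EFormula.src, P1] at h
    | p0 p q x => rcases hs with h | h | h <;> simp [EFormula.src, P1] at h
    | p1 p q x => rcases hs with h | h | h <;> simp [EFormula.src, P1] at h
    | seq0 p p' q q' x x' => rcases hs with h | h | h <;> simp [EFormula.src, P1] at h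
    | seq1 p p' q q' x x' => rcases hs with h | h | h <;> simp [EFormula.src, P1] at h
    | seq2 p q q' x => rcases hs with h | h | h <;> simp [EFormula.src, P1] at h
    | seq3 p p' q x => rcases hs with h | h | h <;> simp [EFormula.src, P1] at h
    | seq4 p q => rcases hs with h | h | h <;> simp [EFormula.src, P1] at h
    | par0 p p' q q' x x' => rcases hs with h | h | h <;> simp [EFormula.src, P1] at h
    | par1 p p' q q' x x' => rcases hs with h | h | h <;> simp [EFormula.src, P1] at h
    | par2 p q q' x => rcases hs with h | h | h <;> simp [EFormula.src, P1] at h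
    | par3 p p' q x => rcases hs with h | h | h <;> simp [EFormula.src, P1] at h
    | par4 p q => rcases hs with h | h | h <;> simp [EFormula.src, P1] at h
    | f0 s' p q x =>
        rcases hs with h | h | h <;> simp [EFormula.src, P1] at h
        obtain ⟨h1, rfl, rfl⟩ := h
        rcases hl with h | h | h <;> simp [EFormula.lbl] at h
        simp [Tpos, P1, h1, h]
    | f1 s' p q x =>
        rcases hs with h | h | h <;> simp [EFormula.src, P1] at h
        obtain ⟨h1, rfl, rfl⟩ := h
        have h2 := hc.1 _ (Set.mem_insert_iff.mpr (Or.inr rfl)) trivial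
        simp [Tpos, P1] at h2
    | if0 s' p p' q x =>
        rcases hs with h | h | h <;> simp [EFormula.src, P1] at h
        obtain ⟨h1, rfl, rfl⟩ := h
        have h2 := hc.1 _ (Set.mem_insert_iff.mpr (Or.inr rfl)) trivial
        simp [Tpos, P1] at h2
        obtain ⟨rfl, rfl⟩ := h2
        simp [Tpos, P1, h1]
    | if1 s' p q q' x =>
        rcases hs with h | h | h <;> simp [EFormula.src, P1] at h
        obtain ⟨h1, rfl, rfl⟩ := h
        have h2 := hc.1 _ (Set.mem_insert_iff.mpr (Or.inr rfl)) trivial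
        simp [Tpos, P1] at h2
    | if4 s' p q =>
        rcases hs with h | h | h <;> simp [EFormula.src, P1] at h
        obtain ⟨h1, rfl, rfl⟩ := h
        have h2 := hc.1 _ (Set.mem_insert_iff.mpr (Or.inr rfl)) trivial
        simp [Tpos, P1] at h2
    | if5 s' p q =>
        rcases hs with h | h | h <;> simp [EFormula.src, P1] at h
        obtain ⟨h1, rfl, rfl⟩ := h
        subst h1
        exact ((hc.2 _ (Set.mem_insert _ _) (by simp [EFormula.isPos])
            (EFormula.emits (P1 s') s') (by simp [Tpos])) ⟨rfl, rfl⟩).elim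

lemma Tneg_model :
    ESupportedModel (P1 s) ({P1 s, Prog.emit s, Prog.nil} : Set (Prog S)) (L1 s) (Tneg s) := by
  refine ⟨?_, ?_, ?_⟩
  · intro φ hφ
    rcases hφ with h | h | h | h <;> subst h <;> trivial
  · intro φ hφ
    rcases hφ with h | h | h | h <;> subst h
    · exact ⟨∅, EsterelRule.e0 s, econs_empty _⟩
    · exact ⟨∅, EsterelRule.em s, econs_empty _⟩
    · exact ⟨∅, EsterelRule.nil, econs_empty _⟩
    · refine ⟨_, EsterelRule.if5 s (Prog.emit s) Prog.nil, ?_, ?_⟩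
      · intro ψ hψ hp
        rcases hψ with h | h <;> subst h
        · exact absurd hp (by simp [EFormula.isPos] at hp)
        · simp [Tneg]
      · intro ψ hψ hnp χ hχ hcon
        rcases hψ with h | h <;> subst h
        · rcases hχ with h | h | h | h <;> subst h <;>
            simp [EFormula.contradicts, P1] at hcon
        · exact absurd trivial hnp
  · intro K φ hr hs hl hc
    cases hr with
    | e0 x =>
        rcases hs with h | h | h <;> simp [EFormula.src, P1] at h
        subst h
        simp [Tneg]
    | nil => simp [Tneg]
    | em x =>
        rcases hs with h | h | h <;> simp [EFormula.src, P1] at h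
        subst h
        simp [Tneg]
    | s0 p q x => rcases hs with h | h | h <;> simp [EFormula.src, P1] at h
    | s1 p q x => rcases hs with h | h | h <;> simp [EFormula.src, P1] at h
    | s2 p p' q x x' => rcases hs with h | h | h <;> simp [EFormula.src, P1] at h
    | p0 p q x => rcases hs with h | h | h <;> simp [EFormula.src, P1] at h
    | p1 p q x => rcases hs with h | h | h <;> simp [EFormula.src, P1] at h
    | seq0 p p' q q' x x' => rcases hs with h | h | h <;> simp [EFormula.src, P1] at h
    | seq1 p p' q q' x x' => rcases hs with h | h | h <;> simp [EFormula.src, P1] at h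
    | seq2 p q q' x => rcases hs with h | h | h <;> simp [EFormula.src, P1] at h
    | seq3 p p' q x => rcases hs with h | h | h <;> simp [EFormula.src, P1] at h
    | seq4 p q => rcases hs with h | h | h <;> simp [EFormula.src, P1] at h
    | par0 p p' q q' x x' => rcases hs with h | h | h <;> simp [EFormula.src, P1] at h
    | par1 p p' q q' x x' => rcases hs with h | h | h <;> simp [EFormula.src, P1] at h
    | par2 p q q' x => rcases hs with h | h | h <;> simp [EFormula.src, P1] at h
    | par3 p p' q x => rcases hs with h | h | h <;> simp [EFormula.src, P1] at h
    | par4 p q => rcases hs with h | h | h <;> simp [EFormula.src, P1] at h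
    | f0 s' p q x =>
        rcases hs with h | h | h <;> simp [EFormula.src, P1] at h
        obtain ⟨h1, rfl, rfl⟩ := h
        have h2 := hc.1 _ (Set.mem_insert _ _) trivial
        simp [Tneg, P1, h1] at h2
    | f1 s' p q x =>
        rcases hs with h | h | h <;> simp [EFormula.src, P1] at h
        obtain ⟨h1, rfl, rfl⟩ := h
        have h2 := hc.1 _ (Set.mem_insert_iff.mpr (Or.inr rfl)) trivial
        simp [Tneg, P1] at h2
    | if0 s' p p' q x =>
        rcases hs with h | h | h <;> simp [EFormula.src, P1] at h
        obtain ⟨h1, rfl, rfl⟩ := h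
        have h2 := hc.1 _ (Set.mem_insert _ _) trivial
        simp [Tneg, P1, h1] at h2
    | if1 s' p q q' x =>
        rcases hs with h | h | h <;> simp [EFormula.src, P1] at h
        obtain ⟨h1, rfl, rfl⟩ := h
        have h2 := hc.1 _ (Set.mem_insert_iff.mpr (Or.inr rfl)) trivial
        simp [Tneg, P1] at h2
    | if4 s' p q =>
        rcases hs with h | h | h <;> simp [EFormula.src, P1] at h
        obtain ⟨h1, rfl, rfl⟩ := h
        have h2 := hc.1 _ (Set.mem_insert_iff.mpr (Or.inr rfl)) trivial
        simp [Tneg, P1] at h2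
    | if5 s' p q =>
        rcases hs with h | h | h <;> simp [EFormula.src, P1] at h
        obtain ⟨h1, rfl, rfl⟩ := h
        simp [Tneg, P1, h1]

end Aux

/-- In the Esterel TSS with context `c = P1`, the program
`P1 = present s then emit s else 0` has at least two distinct supported models for
`P = subterms(P1) = {P1, emit s, 0}` and the labels `{⊨ s, ✓, →s}`: one containing the
emission predicate `P1 ⊨ s` and one not containing it.  Hence `P1` is not logically coherent
(it does not have a unique supported model). -/
theorem P1_not_logically_coherent {S : Type} (s : S) :
    (P1 s).subterms = {P1 s, Prog.emit s, Prog.nil} ∧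
    (∃ T, ESupportedModel (P1 s) (P1 s).subterms (L1 s) T ∧ EFormula.emits (P1 s) s ∈ T) ∧
    (∃ T, ESupportedModel (P1 s) (P1 s).subterms (L1 s) T ∧ EFormula.emits (P1 s) s ∉ T) ∧
    ¬ ∃! T, ESupportedModel (P1 s) (P1 s).subterms (L1 s) T := by
  have hsub := subterms_P1 s
  refine ⟨hsub, ?_, ?_, ?_⟩
  · exact ⟨Tpos s, by rw [hsub]; exact Tpos_model s, by simp [Tpos]⟩
  · refine ⟨Tneg s, by rw [hsub]; exact Tneg_model s, ?_⟩
    intro h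
    rcases h with h | h | h | h <;> simp [EFormula.src, P1] at h
  · rintro ⟨T, hT, huniq⟩
    have h1 : Tpos s = T := huniq _ (by rw [hsub]; exact Tpos_model s)
    have h2 : Tneg s = T := huniq _ (by rw [hsub]; exact Tneg_model s)
    have : EFormula.emits (P1 s) s ∈ Tneg s := by
      rw [h2, ← h1]; simp [Tpos]
    rcases this with h | h | h | h <;> simp [EFormula.src, P1] at h
end

section
/- Let P2 be the Esterel program 'present s then 0 else emit s' with context c = P2. In the Esterel TSS, P2 has no supported model for P = subterms(P2) = {P2, emit s, 0} and the labels {⊨_{P2} s, ✓_{P2}, →_{P2,s}}. -/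
/-- The program `P2 = present s then 0 else emit s`. -/
def P2 {S : Type} (s : S) : Prog S := Prog.present s Prog.nil (Prog.emit s)

/-- The labels `{⊨ s, ✓, →s}`. -/
def L2 {S : Type} (s : S) : Set (ELabel S) := {ELabel.emits s, ELabel.term, ELabel.trans s}

/-- In the Esterel TSS with context `c = P2`, the program
`P2 = present s then 0 else emit s` has no supported model for
`P = subterms(P2) = {P2, emit s, 0}` and the labels `{⊨ s, ✓, →s}`. -/
theorem P2_no_supported_model {S : Type} (s : S) :
    (P2 s).subterms = {P2 s, Prog.emit s, Prog.nil} ∧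
    ¬ ∃ T, ESupportedModel (P2 s) (P2 s).subterms (L2 s) T := by
  constructor
  · ext p
    simp [P2, Prog.subterms, Set.mem_insert_iff, or_assoc]
  · rintro ⟨T, hpos, hsupp, hclosed⟩
    have hnil : EFormula.emits Prog.nil s ∉ T := by
      intro h
      obtain ⟨K, hr, _⟩ := hsupp _ h
      cases hr
    by_cases hc : EFormula.emits (P2 s) s ∈ T
    · obtain ⟨K, hr, hcons⟩ := hsupp _ hc
      cases hr with
      | f0 =>
        exact hnil (hcons.1 (EFormula.emits Prog.nil s)
          (Set.mem_insert_iff.2 (Or.inr rfl)) trivial)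
      | f1 =>
        exact hcons.2 (EFormula.nemits (P2 s) s) (Set.mem_insert_iff.2 (Or.inl rfl))
          (fun h => h) (EFormula.emits (P2 s) s) hc ⟨rfl, rfl⟩
    · have hemit : EFormula.emits (Prog.emit s) s ∈ T := by
        apply hclosed ∅ _ (EsterelRule.e0 s)
        · simp [EFormula.src, P2, Prog.subterms]
        · simp [EFormula.lbl, L2]
        · exact ⟨fun φ h => absurd h (Set.notMem_empty φ),
            fun φ h => absurd h (Set.notMem_empty φ)⟩
      apply hc
      apply hclosed _ _ (EsterelRule.f1 s Prog.nil (Prog.emit s) s)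
      · simp [EFormula.src, P2, Prog.subterms]
      · simp [EFormula.lbl, L2]
      · constructor
        · intro φ hφ hp
          rcases hφ with rfl | hφ
          · exact absurd hp (fun h => h)
          · rcases hφ with rfl; exact hemit
        · intro φ hφ hnp χ hχ hcon
          rcases hφ with rfl | hφ
          · cases χ <;> simp [EFormula.contradicts] at hcon
            obtain ⟨rfl, rfl⟩ := hcon
            exact hc hχ
          · rcases hφ with rfl
            exact hnp trivial
end

section
/- Let P3 be the Esterel program 'present s then emit s else emit s' with context c = P3. In the Esterel TSS, neither the emission predicate P3 ⊨_{P3} s nor its negation ¬(P3 ⊨_{P3} s) has a supported proof; hence P3 is not constructive. -/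
/-- The program `P3 = present s then emit s else emit s`. -/
def P3 {S : Type} (s : S) : Prog S := Prog.present s (Prog.emit s) (Prog.emit s)


/-- `¬(emit s ⊨ s)` has no supported proof: rule `e0` has no premises. -/
lemma no_nemits_emit {S : Type} (c : Prog S) (s : S) :
    ¬ ESupProof c (EFormula.nemits (Prog.emit s) s) := by
  intro h
  cases h with
  | pos K φ hrule hprem => cases hrule
  | neg φ hφ K hK hrules =>
      obtain ⟨χ, hχ, χ', hχ', _⟩ :=
        hrules ∅ (EFormula.emits (Prog.emit s) s) (EsterelRule.e0 s) ⟨rfl, rfl⟩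
      exact hχ'

lemma key {S : Type} (s : S) :
    ∀ φ, ESupProof (P3 s) φ →
      (φ = EFormula.emits (P3 s) s ∨ φ = EFormula.nemits (P3 s) s) → False := by
  intro φ h
  induction h with
  | pos K φ hrule hprem ih =>
      rintro (rfl | rfl)
      · -- φ = emits (P3 s) s ; rule must be f0 or f1
        cases hrule with
        | f0 s' p q x =>
            exact ih (EFormula.emits (P3 s) s) (Set.mem_insert _ _) (Or.inl rfl)
        | f1 s' p q x =>
            exact ih (EFormula.nemits (P3 s) s) (Set.mem_insert _ _) (Or.inr rfl)
      · cases hrule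
  | neg φ hφ K hK hrules ih =>
      rintro (rfl | rfl)
      · exact hφ trivial
      · obtain ⟨χ, hχ, χ', hχ', hcon⟩ :=
          hrules {EFormula.emits (P3 s) s, EFormula.emits (Prog.emit s) s}
            (EFormula.emits (P3 s) s)
            (EsterelRule.f0 s (Prog.emit s) (Prog.emit s) s) ⟨rfl, rfl⟩
        rcases hχ' with rfl | rfl
        · cases χ with
          | nemits p x =>
              obtain ⟨rfl, rfl⟩ := hcon
              exact ih _ hχ (Or.inr rfl)
          | emits p x => exact hcon
          | term p => exact hcon
          | nterm p => exact hcon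
          | trans p x p' => exact hcon
          | ntrans p x => exact hcon
        · cases χ with
          | nemits p x =>
              obtain ⟨rfl, rfl⟩ := hcon
              exact no_nemits_emit _ _ (hK _ hχ)
          | emits p x => exact hcon
          | term p => exact hcon
          | nterm p => exact hcon
          | trans p x p' => exact hcon
          | ntrans p x => exact hcon

/-- In the Esterel TSS with context `c = P3`, neither the emission
predicate `P3 ⊨ s` nor its negation `¬(P3 ⊨ s)` has a supported proof; hence `P3` is not
constructive. -/
theorem P3_not_constructive {S : Type} (s : S) :
    ¬ ESupProof (P3 s) (EFormula.emits (P3 s) s) ∧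
    ¬ ESupProof (P3 s) (EFormula.nemits (P3 s) s) := by
  exact ⟨fun h => key s _ h (Or.inl rfl), fun h => key s _ h (Or.inr rfl)⟩
end

section
/- Let P4 be the Esterel program (present s0 then emit s0 else 0) ∥ (present s0 then (present s1 then 0 else emit s1) else 0) with context c = P4. In the Esterel TSS, neither the emission predicate P4 ⊨_{P4} s0 nor its negation ¬(P4 ⊨_{P4} s0) has a supported proof; hence P4 is not constructive. -/
/-- The program
`P4 = (present s0 then emit s0 else 0) ∥ (present s0 then (present s1 then 0 else emit s1) else 0)`. -/
def P4 {S : Type} (s0 s1 : S) : Prog S :=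
  Prog.par (Prog.present s0 (Prog.emit s0) Prog.nil)
    (Prog.present s0 (Prog.present s1 Prog.nil (Prog.emit s1)) Prog.nil)


section Aux

variable {S : Type}

private theorem lem1 (s0 s1 : S) (hs : s0 ≠ s1) :
    ∀ φ, ESupProof (P4 s0 s1) φ →
      (φ = EFormula.emits (P4 s0 s1) s0 ∨
       φ = EFormula.emits (Prog.present s0 (Prog.emit s0) Prog.nil) s0 ∨
       φ = EFormula.emits
            (Prog.present s0 (Prog.present s1 Prog.nil (Prog.emit s1)) Prog.nil) s0 ∨
       φ = EFormula.emits (Prog.present s1 Prog.nil (Prog.emit s1)) s0 ∨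
       φ = EFormula.emits Prog.nil s0 ∨
       φ = EFormula.emits (Prog.emit s1) s0) → False := by
  intro φ h
  induction h with
  | pos K φ hrule hprem ih =>
    intro hmem
    rcases hmem with rfl | rfl | rfl | rfl | rfl | rfl
    · rw [show P4 s0 s1 = Prog.par (Prog.present s0 (Prog.emit s0) Prog.nil)
        (Prog.present s0 (Prog.present s1 Prog.nil (Prog.emit s1)) Prog.nil) from rfl] at hrule
      cases hrule with
      | p0 => exact ih _ rfl (Or.inr (Or.inl rfl))
      | p1 => exact ih _ rfl (Or.inr (Or.inr (Or.inl rfl)))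
    · cases hrule with
      | f0 => exact ih _ (Or.inl rfl) (Or.inl rfl)
      | f1 => exact ih _ (Or.inr rfl) (Or.inr (Or.inr (Or.inr (Or.inr (Or.inl rfl)))))
    · cases hrule with
      | f0 => exact ih _ (Or.inr rfl) (Or.inr (Or.inr (Or.inr (Or.inl rfl))))
      | f1 => exact ih _ (Or.inr rfl) (Or.inr (Or.inr (Or.inr (Or.inr (Or.inl rfl)))))
    · cases hrule with
      | f0 => exact ih _ (Or.inr rfl) (Or.inr (Or.inr (Or.inr (Or.inr (Or.inl rfl)))))
      | f1 => exact ih _ (Or.inr rfl) (Or.inr (Or.inr (Or.inr (Or.inr (Or.inr rfl)))))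
    · cases hrule
    · cases hrule with
      | e0 => exact hs rfl
  | neg φ hφ K hK hrules ih =>
    intro hmem
    rcases hmem with rfl | rfl | rfl | rfl | rfl | rfl <;> exact hφ trivial

private theorem lem2 (s0 s1 : S) (hs : s0 ≠ s1) :
    ∀ φ, ESupProof (P4 s0 s1) φ →
      (φ = EFormula.nemits (P4 s0 s1) s0 ∨
       φ = EFormula.nemits (Prog.present s0 (Prog.emit s0) Prog.nil) s0 ∨
       φ = EFormula.nemits (Prog.emit s0) s0) → False := by
  intro φ h
  induction h with
  | pos K φ hrule hprem ih =>
    intro hmem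
    rcases hmem with rfl | rfl | rfl <;> cases hrule
  | neg φ hφ K hK hrules ih =>
    intro hmem
    rcases hmem with rfl | rfl | rfl
    · obtain ⟨χ, hχK, χ', hχ', hc⟩ :=
        hrules _ _ (EsterelRule.p0 (Prog.present s0 (Prog.emit s0) Prog.nil)
          (Prog.present s0 (Prog.present s1 Prog.nil (Prog.emit s1)) Prog.nil) s0)
          ⟨rfl, rfl⟩
      rw [Set.mem_singleton_iff] at hχ'
      subst hχ'
      cases χ <;> try exact hc
      obtain ⟨h1, h2⟩ := hc
      subst h1; subst h2
      exact ih _ hχK (Or.inr (Or.inl rfl))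
    · obtain ⟨χ, hχK, χ', hχ', hc⟩ :=
        hrules _ _ (EsterelRule.f0 s0 (Prog.emit s0) Prog.nil s0) ⟨rfl, rfl⟩
      rcases hχ' with rfl | rfl
      · cases χ <;> try exact hc
        obtain ⟨h1, h2⟩ := hc
        subst h1; subst h2
        exact ih _ hχK (Or.inl rfl)
      · cases χ <;> try exact hc
        obtain ⟨h1, h2⟩ := hc
        subst h1; subst h2
        exact ih _ hχK (Or.inr (Or.inr rfl))
    · obtain ⟨χ, hχK, χ', hχ', hc⟩ :=
        hrules _ _ (EsterelRule.e0 s0) ⟨rfl, rfl⟩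
      exact hχ'

end Aux

/-- In the Esterel TSS with context `c = P4`, neither the emission
predicate `P4 ⊨ s0` nor its negation `¬(P4 ⊨ s0)` has a supported proof; hence `P4` is not
constructive. -/
theorem P4_not_constructive {S : Type} (s0 s1 : S) (hs : s0 ≠ s1) :
    ¬ ESupProof (P4 s0 s1) (EFormula.emits (P4 s0 s1) s0) ∧
    ¬ ESupProof (P4 s0 s1) (EFormula.nemits (P4 s0 s1) s0) := by
  exact ⟨fun h => lem1 s0 s1 hs _ h (Or.inl rfl), fun h => lem2 s0 s1 hs _ h (Or.inl rfl)⟩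
end

section
/- Let P5 be the Esterel program (present s0 then emit s1 else 0) ; emit s0 with context c = P5. In the Esterel TSS, neither the emission predicate P5 ⊨_{P5} s0 nor its negation ¬(P5 ⊨_{P5} s0) has a supported proof; hence P5 is not constructive. -/
/-- The program `P5 = (present s0 then emit s1 else 0) ; emit s0`. -/
def P5 {S : Type} (s0 s1 : S) : Prog S :=
  Prog.seq (Prog.present s0 (Prog.emit s1) Prog.nil) (Prog.emit s0)

section P5Aux

variable {S : Type}

/-- The first component `present s0 then emit s1 else 0` of `P5`. -/
abbrev Fp (s0 s1 : S) : Prog S := Prog.present s0 (Prog.emit s1) Prog.nil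

/-- The "bad" formulae: each of them is unprovable in the Esterel TSS with context `P5`. -/
def Bad (s0 s1 : S) (φ : EFormula S) : Prop :=
  φ = .emits (P5 s0 s1) s0 ∨
  φ = .nemits (P5 s0 s1) s0 ∨
  φ = .emits (Fp s0 s1) s0 ∨
  φ = .term (Fp s0 s1) ∨
  φ = .nterm (Fp s0 s1) ∨
  φ = .nemits (.emit s0) s0 ∨
  φ = .nterm .nil ∨
  ∃ x p', φ = .trans (Fp s0 s1) x p'

lemma no_bad (s0 s1 : S) : ∀ φ : EFormula S, ESupProof (P5 s0 s1) φ → ¬ Bad s0 s1 φ := by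
  intro φ h
  induction h with
  | pos K φ hrule hprem ih =>
    intro hb
    rcases hb with h | h | h | h | h | h | h | ⟨x, p', h⟩ <;> subst h <;>
      unfold P5 at hrule <;> cases hrule
    -- emits (P5 s0 s1) s0
    case s0 => exact ih _ (by simp [P5]) (Or.inr <| Or.inr <| Or.inl rfl)
    case s1 => exact ih _ (by simp [P5]) (Or.inr <| Or.inr <| Or.inr <| Or.inl rfl)
    case s2 p' x' =>
      exact ih _ (by simp [P5]) (Or.inr <| Or.inr <| Or.inr <| Or.inr <| Or.inr <| Or.inr <|
        Or.inr ⟨x', p', rfl⟩)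
    -- emits (Fp s0 s1) s0
    case f0 => exact ih _ (by simp [P5]) (Or.inl rfl)
    case f1 => exact ih _ (by simp [P5]) (Or.inr <| Or.inl rfl)
    -- term (Fp s0 s1)
    case if4 => exact ih _ (by simp [P5]) (Or.inl rfl)
    case if5 => exact ih _ (by simp [P5]) (Or.inr <| Or.inl rfl)
    -- trans (Fp s0 s1) x p'
    case if0 => exact ih _ (by simp [P5]) (Or.inl rfl)
    case if1 => exact ih _ (by simp [P5]) (Or.inr <| Or.inl rfl)
  | neg φ hφ K hK hrules ih =>
    intro hb
    rcases hb with h | h | h | h | h | h | h | ⟨x, p', h⟩ <;> subst h <;>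
      try exact hφ trivial
    -- nemits (P5 s0 s1) s0 : use rule s1
    · obtain ⟨χ, hχK, χ', hχ', hcon⟩ :=
        hrules _ _ (EsterelRule.s1 (Fp s0 s1) (Prog.emit s0) s0) ⟨rfl, rfl⟩
      simp only [Set.mem_insert_iff, Set.mem_singleton_iff] at hχ'
      rcases hχ' with h' | h' <;> subst h' <;> cases χ <;>
          simp [EFormula.contradicts] at hcon
      · subst hcon
        exact ih _ hχK (Or.inr <| Or.inr <| Or.inr <| Or.inr <| Or.inl rfl)
      · obtain ⟨h1, h2⟩ := hcon; subst h1; subst h2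
        exact ih _ hχK (Or.inr <| Or.inr <| Or.inr <| Or.inr <| Or.inr <| Or.inl rfl)
    -- nterm (Fp s0 s1) : use rule if5
    · obtain ⟨χ, hχK, χ', hχ', hcon⟩ :=
        hrules _ _ (EsterelRule.if5 s0 (Prog.emit s1) Prog.nil) rfl
      simp only [Set.mem_insert_iff, Set.mem_singleton_iff] at hχ'
      rcases hχ' with h' | h' <;> subst h' <;> cases χ <;>
          simp [EFormula.contradicts] at hcon
      · obtain ⟨h1, h2⟩ := hcon; subst h1; subst h2
        exact ih _ hχK (Or.inl rfl)
      · subst hcon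
        exact ih _ hχK (Or.inr <| Or.inr <| Or.inr <| Or.inr <| Or.inr <| Or.inr <|
          Or.inl rfl)
    -- nemits (emit s0) s0 : directly contradicted by axiom e0
    · obtain ⟨χ, hχK, χ', hχ', hcon⟩ := hrules _ _ (EsterelRule.e0 s0) ⟨rfl, rfl⟩
      exact absurd hχ' (Set.notMem_empty χ')
    -- nterm nil : directly contradicted by axiom nil
    · obtain ⟨χ, hχK, χ', hχ', hcon⟩ := hrules _ _ EsterelRule.nil rfl
      exact absurd hχ' (Set.notMem_empty χ')

end P5Aux

/-- In the Esterel TSS with context `c = P5`, neither the emission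
predicate `P5 ⊨ s0` nor its negation `¬(P5 ⊨ s0)` has a supported proof; hence `P5` is not
constructive. -/
theorem P5_not_constructive {S : Type} (s0 s1 : S) (hs : s0 ≠ s1) :
    ¬ ESupProof (P5 s0 s1) (EFormula.emits (P5 s0 s1) s0) ∧
    ¬ ESupProof (P5 s0 s1) (EFormula.nemits (P5 s0 s1) s0) := by
  exact ⟨fun h => no_bad s0 s1 _ h (Or.inl rfl), fun h => no_bad s0 s1 _ h (Or.inr (Or.inl rfl))⟩
end
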